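/- Let d ≥ 2 be a prime, let a be an integer with gcd(a, d) = 1, let T ≥ 1 be a real number, and set Q_T = d · ∏_{p ≤ T, p prime, p ≡ 1 (mod d)} p. Then R_{Q_T}(d; a) = (∏_{p ≤ T, p prime, p ≡ 1 (mod d)} p/(p − 1)) · R_d(d; a). -/

import Mathlib

/-- The least positive residue of `n` modulo `Q`: the unique integer in `[1, Q]`
congruent to `n` mod `Q` (for `Q ≥ 1`). -/
def lpr (Q : ℕ) (n : ℤ) : ℤ := (n - 1) % Q + 1

/-- `R*_Q(d;a) = (1/φ(Q)²) Σ_{s,t=1..Q, gcd(st,Q)=1, s ≡ a (mod d)} ⟨t-s⟩_Q`. -/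
def Rstar (Q d : ℕ) (a : ℤ) : ℚ :=
  (1 / (Nat.totient Q : ℚ) ^ 2) *
    ∑ s ∈ Finset.Icc 1 Q, ∑ t ∈ Finset.Icc 1 Q,
      if Nat.gcd (s * t) Q = 1 ∧ (s : ℤ) ≡ a [ZMOD d] then (lpr Q ((t : ℤ) - (s : ℤ)) : ℚ) else 0

/-- `R̄_Q(d) = (1/φ(d)) (Q/φ(Q)) (φ(Q)+1)/2`. -/
def Rbar (Q d : ℕ) : ℚ :=
  (1 / (Nat.totient d : ℚ)) * ((Q : ℚ) / (Nat.totient Q : ℚ)) * (((Nat.totient Q : ℚ) + 1) / 2)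

/-- The bias constant `R_Q(d;a) = R*_Q(d;a) - R̄_Q(d)`. -/
def Rbias (Q d : ℕ) (a : ℤ) : ℚ := Rstar Q d a - Rbar Q d


section lprlemmas
variable {Q : ℕ}

theorem lpr_pos (hQ : 1 ≤ Q) (n : ℤ) : 1 ≤ lpr Q n := by
  have h : (0:ℤ) ≤ (n-1) % Q := Int.emod_nonneg _ (by positivity)
  unfold lpr; omega

theorem lpr_le (hQ : 1 ≤ Q) (n : ℤ) : lpr Q n ≤ Q := by
  have h : (n-1) % Q < (Q:ℤ) := Int.emod_lt_of_pos _ (by exact_mod_cast hQ)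
  unfold lpr; omega

theorem lpr_emod (n : ℤ) : lpr Q n ≡ n [ZMOD Q] := by
  unfold lpr
  calc (n-1) % Q + 1 ≡ (n-1) + 1 [ZMOD Q] := Int.ModEq.add_right 1 (Int.emod_emod_of_dvd _ dvd_rfl)
    _ = n := by ring

theorem lpr_congr {n m : ℤ} (h : n ≡ m [ZMOD Q]) : lpr Q n = lpr Q m := by
  unfold lpr
  have : (n-1) % Q = (m-1) % Q := Int.ModEq.sub_right 1 h
  omega

theorem lpr_eq_of (hQ : 1 ≤ Q) {n x : ℤ} (h1 : 1 ≤ x) (h2 : x ≤ Q) (h : x ≡ n [ZMOD Q]) :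
    lpr Q n = x := by
  have hc : lpr Q n ≡ x [ZMOD Q] := (lpr_emod n).trans h.symm
  have hd : (Q:ℤ) ∣ x - lpr Q n := hc.dvd
  have b1 := lpr_pos hQ n
  have b2 := lpr_le hQ n
  have : x - lpr Q n = 0 := Int.eq_zero_of_abs_lt_dvd hd (by rw [abs_lt]; constructor <;> omega)
  omega

theorem lpr_add_mul (n : ℤ) (k : ℤ) : lpr Q (n + k * Q) = lpr Q n :=
  lpr_congr (by simpa using Int.ModEq.add_right (k*Q) (Int.ModEq.refl n) |>.trans (by simp [Int.add_mul_emod_self_left, Int.ModEq]))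

theorem lpr_mul_left (hQ : 1 ≤ Q) {p : ℕ} (hp : 1 ≤ p) (c : ℤ) :
    lpr (Q * p) ((p:ℤ) * c) = p * lpr Q c := by
  apply lpr_eq_of (Nat.one_le_iff_ne_zero.mpr (by positivity))
  · nlinarith [lpr_pos hQ c, (by exact_mod_cast hp : (1:ℤ) ≤ p)]
  · push_cast
    nlinarith [lpr_le hQ c, (by exact_mod_cast hp : (1:ℤ) ≤ p)]
  · have h := (lpr_emod (Q := Q) c).mul_left' (c := (p:ℤ))
    have h2 : ((p:ℤ)) * (Q:ℤ) = ((Q*p : ℕ) : ℤ) := by push_cast; ring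
    rw [h2] at h
    exact h

end lprlemmas

section L1
variable {Q p : ℕ}

theorem lpr_modQ (hQ : 1 ≤ Q) (hp : 1 ≤ p) (n : ℤ) : lpr (Q*p) n ≡ n [ZMOD Q] := by
  have h := lpr_emod (Q := Q*p) n
  have : ((Q:ℤ)) ∣ ((Q*p : ℕ):ℤ) := by push_cast; exact Dvd.intro _ rfl
  exact h.of_dvd this

theorem lpr_sum_range (hQ : 1 ≤ Q) (hp : 1 ≤ p) (c : ℤ) :
    ∑ j ∈ Finset.range p, lpr (Q*p) (c + (j:ℤ)*Q) = ∑ j ∈ Finset.range p, (lpr Q c + (j:ℤ)*Q) := by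
  have hQp : 1 ≤ Q*p := Nat.one_le_iff_ne_zero.mpr (by positivity)
  set f : ℕ → ℤ := fun j => lpr (Q*p) (c + (j:ℤ)*Q) with hf
  set g : ℕ → ℤ := fun j => lpr Q c + (j:ℤ)*Q with hg
  have hginj : Set.InjOn g (Finset.range p) := by
    intro x _ y _ h
    simp only [hg] at h
    have : (x:ℤ) = y := by
      have hQ0 : (0:ℤ) < Q := by exact_mod_cast hQ
      nlinarith [h]
    exact_mod_cast this
  have hfmem : ∀ j ∈ Finset.range p, ∃ k ∈ Finset.range p, f j = g k := by
    intro j hj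
    have h1 : f j ≡ c + (j:ℤ)*Q [ZMOD Q] := lpr_modQ hQ hp _
    have h2 : c + (j:ℤ)*Q ≡ c [ZMOD Q] := Int.add_mul_emod_self_right _ _ _
    have h3 : f j ≡ lpr Q c [ZMOD Q] := (h1.trans h2).trans (lpr_emod c).symm
    obtain ⟨k', hk'⟩ := h3.symm.dvd
    have b1 := lpr_pos hQp (c + (j:ℤ)*Q)
    have b2 := lpr_le hQp (c + (j:ℤ)*Q)
    push_cast at b2
    have bl1 := lpr_pos hQ c
    have bl2 := lpr_le hQ c
    have hQ0 : (0:ℤ) < Q := by exact_mod_cast hQ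
    have hp0 : (0:ℤ) < p := by exact_mod_cast hp
    have hk'b : 0 ≤ k' ∧ k' < p := by constructor <;> nlinarith [hk']
    refine ⟨k'.toNat, Finset.mem_range.mpr (by omega), ?_⟩
    simp only [hg, hf]
    rw [Int.toNat_of_nonneg hk'b.1]
    linarith [hk']
  have hfinj : Set.InjOn f (Finset.range p) := by
    intro x hx y hy h
    simp only [Finset.coe_range, Set.mem_Iio] at hx hy
    have e1 : (c + (x:ℤ)*Q) ≡ (c + (y:ℤ)*Q) [ZMOD ((Q*p:ℕ):ℤ)] := by
      refine (lpr_emod _).symm.trans ?_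
      rw [show lpr (Q*p) (c+(x:ℤ)*Q) = lpr (Q*p) (c+(y:ℤ)*Q) from h]
      exact lpr_emod _
    have hd : ((Q:ℤ)*(p:ℤ)) ∣ (Q:ℤ)*((y:ℤ)-(x:ℤ)) := by
      have h0 := e1.dvd
      have e : c + (y:ℤ)*Q - (c + (x:ℤ)*Q) = (Q:ℤ)*((y:ℤ)-(x:ℤ)) := by ring
      rw [e] at h0
      exact_mod_cast h0
    have hQne : (Q:ℤ) ≠ 0 := by positivity
    have hpd : (p:ℤ) ∣ ((y:ℤ)-(x:ℤ)) := (mul_dvd_mul_iff_left hQne).mp hd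
    have : (y:ℤ) - x = 0 := Int.eq_zero_of_abs_lt_dvd hpd (by rw [abs_lt]; omega)
    omega
  have himg : (Finset.range p).image f = (Finset.range p).image g := by
    apply Finset.eq_of_subset_of_card_le
    · intro y hy
      simp only [Finset.mem_image] at hy ⊢
      obtain ⟨j, hj, rfl⟩ := hy
      obtain ⟨k, hk, he⟩ := hfmem j hj
      exact ⟨k, hk, he.symm⟩
    · rw [Finset.card_image_of_injOn hginj, Finset.card_image_of_injOn hfinj]
  calc ∑ j ∈ Finset.range p, f j
      = ∑ y ∈ (Finset.range p).image f, y := (Finset.sum_image (g := f) (f := id) (fun x hx y hy => hfinj hx hy)).symm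
    _ = ∑ y ∈ (Finset.range p).image g, y := by rw [himg]
    _ = ∑ j ∈ Finset.range p, g j := Finset.sum_image (g := g) (f := id) (fun x hx y hy => hginj hx hy)

end L1

section split

theorem sum_Icc_mul {M : Type*} [AddCommMonoid M] (Q : ℕ) (p : ℕ) (f : ℕ → M) :
    ∑ s ∈ Finset.Icc 1 (Q*p), f s = ∑ i ∈ Finset.range p, ∑ s₀ ∈ Finset.Icc 1 Q, f (s₀ + i*Q) := by
  induction p with
  | zero => simp
  | succ p ih =>
    rw [Finset.sum_range_succ, ← ih]
    have h1 : Q*(p+1) = Q*p + Q := by ring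
    have e : ∀ n:ℕ, Finset.Icc 1 n = Finset.Ioc 0 n := fun n => Finset.Icc_add_one_left_eq_Ioc 0 n
    rw [h1, e, e,
      ← Finset.sum_Ioc_consecutive f (by omega : 0 ≤ Q*p) (by omega : Q*p ≤ Q*p + Q)]
    congr 1
    rw [show Finset.Ioc (Q*p) (Q*p + Q) = Finset.map (addLeftEmbedding (Q*p)) (Finset.Ioc 0 Q) from by
      rw [Finset.map_add_left_Ioc]; norm_num]
    rw [Finset.sum_map]
    exact Finset.sum_congr rfl (fun x _ => by
      simp only [addLeftEmbedding_apply]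
      rw [show Q*p + x = x + p*Q by ring])

theorem sum_Icc_dvd {M : Type*} [AddCommMonoid M] (Q p : ℕ) (hp : 1 ≤ p) (f : ℕ → M) :
    ∑ t ∈ (Finset.Icc 1 (Q*p)).filter (fun t => p ∣ t), f t = ∑ t' ∈ Finset.Icc 1 Q, f (p*t') := by
  refine Finset.sum_nbij' (i := fun t => t / p) (j := fun t' => p * t') ?_ ?_ ?_ ?_ ?_
  · intro t ht
    simp only [Finset.mem_filter, Finset.mem_Icc] at ht ⊢
    obtain ⟨⟨h1, h2⟩, k, rfl⟩ := ht
    rw [Nat.mul_div_cancel_left _ (by omega)]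
    constructor
    · by_contra h; push_neg at h; interval_cases k <;> omega
    · by_contra h; push_neg at h; nlinarith
  · intro t' ht'
    simp only [Finset.mem_filter, Finset.mem_Icc] at ht' ⊢
    exact ⟨⟨by nlinarith [ht'.1], by nlinarith [ht'.2]⟩, Dvd.intro _ rfl⟩
  · intro t ht
    simp only [Finset.mem_filter] at ht
    exact Nat.mul_div_cancel' ht.2
  · intro t' _
    exact Nat.mul_div_cancel_left _ (by omega)
  · intro t ht
    simp only [Finset.mem_filter] at ht
    rw [Nat.mul_div_cancel' ht.2]

end split

section reindex

theorem eq_of_mod_Icc {Q x y : ℕ} (hx1 : 1 ≤ x) (hx2 : x ≤ Q) (hy1 : 1 ≤ y) (hy2 : y ≤ Q)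
    (h : x % Q = y % Q) : x = y := by
  rcases eq_or_lt_of_le hx2 with rfl | hx
  · rw [Nat.mod_self] at h
    rcases eq_or_lt_of_le hy2 with rfl | hy
    · rfl
    · rw [Nat.mod_eq_of_lt hy] at h; omega
  · rw [Nat.mod_eq_of_lt hx] at h
    rcases eq_or_lt_of_le hy2 with rfl | hy
    · rw [Nat.mod_self] at h; omega
    · rw [Nat.mod_eq_of_lt hy] at h; omega

theorem sum_mul_reindex {Q p : ℕ} (hQ : 1 ≤ Q) (hp1 : 1 ≤ p) (hp : Nat.Coprime p Q)
    (C : ℕ → Prop) [DecidablePred C]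
    (hCmod : ∀ x y, x % Q = y % Q → (C x ↔ C y))
    (hCp : ∀ x, C (p*x) ↔ C x)
    (g : ℕ → ℚ) (hg : ∀ x y, x % Q = y % Q → g x = g y) :
    ∑ x ∈ (Finset.Icc 1 Q).filter C, g (p*x) = ∑ x ∈ (Finset.Icc 1 Q).filter C, g x := by
  set m : ℕ → ℕ := fun x => (p*x - 1) % Q + 1 with hm
  have hmmod : ∀ x, 1 ≤ x → (m x) % Q = (p*x) % Q := by
    intro x hx
    have h1 : 1 ≤ p*x := by nlinarith
    simp only [hm]
    rw [Nat.mod_add_mod, show p*x - 1 + 1 = p*x by omega]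
  have hmIcc : ∀ x, m x ∈ Finset.Icc 1 Q := by
    intro x
    simp only [hm, Finset.mem_Icc]
    have := Nat.mod_lt (p*x - 1) (show 0 < Q by omega)
    omega
  have hinj : Set.InjOn m ((Finset.Icc 1 Q).filter C) := by
    intro x hx y hy hxy
    simp only [Finset.coe_filter, Set.mem_setOf_eq, Finset.mem_Icc] at hx hy
    have h1 : (p*x) % Q = (p*y) % Q := by
      rw [← hmmod x hx.1.1, ← hmmod y hy.1.1, hxy]
    have h2 : x % Q = y % Q := Nat.ModEq.cancel_left_of_coprime (Nat.coprime_comm.mp hp) h1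
    exact eq_of_mod_Icc hx.1.1 hx.1.2 hy.1.1 hy.1.2 h2
  have hmC : ∀ x, x ∈ (Finset.Icc 1 Q).filter C → m x ∈ (Finset.Icc 1 Q).filter C := by
    intro x hx
    simp only [Finset.mem_filter, Finset.mem_Icc] at hx ⊢
    refine ⟨by simpa using (Finset.mem_Icc).mp (hmIcc x), ?_⟩
    rw [hCmod (m x) (p*x) (hmmod x hx.1.1), hCp]
    exact hx.2
  have himg : ((Finset.Icc 1 Q).filter C).image m = (Finset.Icc 1 Q).filter C := by
    apply Finset.eq_of_subset_of_card_le
    · intro y hy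
      simp only [Finset.mem_image] at hy
      obtain ⟨x, hx, rfl⟩ := hy
      exact hmC x hx
    · rw [Finset.card_image_of_injOn hinj]
  calc ∑ x ∈ (Finset.Icc 1 Q).filter C, g (p*x)
      = ∑ x ∈ (Finset.Icc 1 Q).filter C, g (m x) := by
        refine Finset.sum_congr rfl (fun x hx => ?_)
        simp only [Finset.mem_filter, Finset.mem_Icc] at hx
        exact (hg _ _ (hmmod x hx.1.1)).symm
    _ = ∑ y ∈ ((Finset.Icc 1 Q).filter C).image m, g y :=
        (Finset.sum_image (g := m) (f := g) (fun x hx y hy => hinj hx hy)).symm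
    _ = ∑ x ∈ (Finset.Icc 1 Q).filter C, g x := by rw [himg]

theorem card_Icc_coprime (Q : ℕ) (hQ : 1 ≤ Q) :
    ((Finset.Icc 1 Q).filter (fun x => Nat.gcd x Q = 1)).card = Q.totient := by
  rcases eq_or_lt_of_le hQ with h1 | h2
  · rw [← h1]
    decide
  · rw [Nat.totient_eq_card_coprime]
    congr 1
    ext x
    simp only [Finset.mem_filter, Finset.mem_Icc, Finset.mem_range]
    constructor
    · rintro ⟨⟨hx1, hx2⟩, hg⟩
      refine ⟨?_, by rwa [Nat.coprime_comm]⟩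
      rcases eq_or_lt_of_le hx2 with rfl | h
      · rw [Nat.gcd_self] at hg; omega
      · exact h
    · rintro ⟨hx, hg⟩
      have hg' : Nat.gcd x Q = 1 := by rwa [Nat.coprime_comm] at hg
      refine ⟨⟨?_, hx.le⟩, hg'⟩
      rcases Nat.eq_zero_or_pos x with rfl | h
      · rw [Nat.gcd_zero_left] at hg'; omega
      · exact h

end reindex

section core

def Ssum (Q d : ℕ) (a : ℤ) : ℚ :=
  ∑ s ∈ Finset.Icc 1 Q, ∑ t ∈ Finset.Icc 1 Q,
    if (Nat.gcd s Q = 1 ∧ (s:ℤ) ≡ a [ZMOD d]) ∧ Nat.gcd t Q = 1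
    then ((lpr Q ((t:ℤ) - (s:ℤ)) : ℤ) : ℚ) else 0

def Ncnt (Q d : ℕ) (a : ℤ) : ℕ :=
  ((Finset.Icc 1 Q).filter (fun s => Nat.gcd s Q = 1 ∧ (s:ℤ) ≡ a [ZMOD d])).card

theorem gcd_mod_inv {Q x y : ℕ} (h : x % Q = y % Q) : Nat.gcd x Q = Nat.gcd y Q := by
  rw [Nat.gcd_comm x, Nat.gcd_comm y, Nat.gcd_rec Q x, Nat.gcd_rec Q y, h]

theorem gcd_add_mul {Q x j : ℕ} : Nat.gcd (x + j*Q) Q = Nat.gcd x Q :=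
  gcd_mod_inv (Nat.add_mul_mod_self_right x j Q)

theorem zmod_mod_inv {d Q : ℕ} (hdQ : d ∣ Q) {x y : ℕ} (h : x % Q = y % Q) {a : ℤ} :
    ((x:ℤ) ≡ a [ZMOD d]) ↔ ((y:ℤ) ≡ a [ZMOD d]) := by
  have hxy : (x:ℤ) % Q = (y:ℤ) % Q := by
    have := congrArg (Nat.cast : ℕ → ℤ) h
    push_cast at this
    exact this
  have hxy' : (x:ℤ) ≡ (y:ℤ) [ZMOD (Q:ℕ)] := hxy
  have md : (x:ℤ) ≡ (y:ℤ) [ZMOD d] :=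
    hxy'.of_dvd (Int.natCast_dvd_natCast.mpr hdQ)
  exact ⟨fun hx => md.symm.trans hx, fun hy => md.trans hy⟩

theorem cond_p_mul {d p : ℕ} (hd : 2 ≤ d) (hpd : p % d = 1) (x : ℕ) {a : ℤ} :
    (((p*x : ℕ):ℤ) ≡ a [ZMOD d]) ↔ ((x:ℤ) ≡ a [ZMOD d]) := by
  have h1 : (p:ℤ) % d = ((p % d : ℕ) : ℤ) := by push_cast; rfl
  have hp1 : (p:ℤ) ≡ 1 [ZMOD d] := by
    have hd' : (2:ℤ) ≤ (d:ℤ) := by exact_mod_cast hd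
    unfold Int.ModEq
    rw [h1, hpd, Int.emod_eq_of_lt (by norm_num) (by omega)]
    norm_num
  have hmul : ((p:ℤ) * x) ≡ (x:ℤ) [ZMOD d] := by
    have := hp1.mul_right (x:ℤ)
    simpa using this
  constructor
  · intro hx
    push_cast at hx
    exact hmul.symm.trans hx
  · intro hx
    push_cast
    exact hmul.trans hx

theorem gcd_p_mul {Q p : ℕ} (hpQ : Nat.Coprime p Q) (x : ℕ) :
    Nat.gcd (p*x) Q = 1 ↔ Nat.gcd x Q = 1 := by
  constructor
  · intro h
    exact Nat.Coprime.coprime_dvd_left (dvd_mul_left x p) h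
  · intro h
    exact Nat.Coprime.mul hpQ h

theorem gauss_q (p : ℕ) (hp1 : 1 ≤ p) : ∑ j ∈ Finset.range p, (j:ℚ) = (p:ℚ)*((p:ℚ)-1)/2 := by
  have h := Finset.sum_range_id_mul_two p
  have h2 : (((∑ i ∈ Finset.range p, i) * 2 : ℕ) : ℚ) = ((p * (p-1) : ℕ) : ℚ) := by
    exact_mod_cast congrArg (Nat.cast : ℕ → ℚ) h
  push_cast [Nat.cast_sub hp1] at h2
  linarith

end core

section L1q
variable {Q p : ℕ}

theorem lpr_sum_q (hQ : 1 ≤ Q) (hp1 : 1 ≤ p) (c : ℤ) :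
    ∑ j ∈ Finset.range p, ((lpr (Q*p) (c + (j:ℤ)*Q) : ℤ) : ℚ)
      = (p:ℚ) * ((lpr Q c : ℤ) : ℚ) + (Q:ℚ) * ((p:ℚ)*((p:ℚ)-1)/2) := by
  have h := lpr_sum_range hQ hp1 c
  have h2 : ((∑ j ∈ Finset.range p, lpr (Q*p) (c + (j:ℤ)*Q) : ℤ) : ℚ)
      = ((∑ j ∈ Finset.range p, (lpr Q c + (j:ℤ)*Q) : ℤ) : ℚ) := by
    exact_mod_cast congrArg (Int.cast : ℤ → ℚ) h
  push_cast at h2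
  rw [h2, Finset.sum_add_distrib, Finset.sum_const, ← Finset.sum_mul, gauss_q p hp1]
  simp [Finset.card_range]
  ring

theorem lpr_sum_q_neg (hQ : 1 ≤ Q) (hp1 : 1 ≤ p) (c : ℤ) :
    ∑ i ∈ Finset.range p, ((lpr (Q*p) (c - (i:ℤ)*Q) : ℤ) : ℚ)
      = (p:ℚ) * ((lpr Q c : ℤ) : ℚ) + (Q:ℚ) * ((p:ℚ)*((p:ℚ)-1)/2) := by
  rw [← Finset.sum_range_reflect]
  have step : ∀ j ∈ Finset.range p,
      ((lpr (Q*p) (c - ((p - 1 - j : ℕ):ℤ)*Q) : ℤ) : ℚ)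
      = ((lpr (Q*p) ((c - ((p:ℤ)-1)*Q) + (j:ℤ)*Q) : ℤ) : ℚ) := by
    intro j hj
    simp only [Finset.mem_range] at hj
    congr 2
    have : ((p - 1 - j : ℕ) : ℤ) = (p:ℤ) - 1 - j := by omega
    rw [this]; ring
  rw [Finset.sum_congr rfl step, lpr_sum_q hQ hp1 (c - ((p:ℤ)-1)*Q)]
  congr 2
  have : c - ((p:ℤ)-1)*Q = c + (-((p:ℤ)-1))*Q := by ring
  rw [this, lpr_add_mul]

end L1q

section reductions
variable {Q d p : ℕ} {a : ℤ}

theorem innerT (hQ : 1 ≤ Q) (hp1 : 1 ≤ p) (s' : ℤ) :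
    ∑ t ∈ Finset.Icc 1 (Q*p), (if Nat.gcd t Q = 1 then ((lpr (Q*p) ((t:ℤ) - s') : ℤ):ℚ) else 0)
    = ∑ t₀ ∈ Finset.Icc 1 Q, (if Nat.gcd t₀ Q = 1 then
        ((p:ℚ) * ((lpr Q ((t₀:ℤ) - s') : ℤ):ℚ) + (Q:ℚ)*((p:ℚ)*((p:ℚ)-1)/2)) else 0) := by
  rw [sum_Icc_mul Q p (fun t => if Nat.gcd t Q = 1 then ((lpr (Q*p) ((t:ℤ) - s') : ℤ):ℚ) else 0)]
  rw [Finset.sum_comm]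
  refine Finset.sum_congr rfl (fun t₀ _ => ?_)
  by_cases h : Nat.gcd t₀ Q = 1
  · simp only [gcd_add_mul, h, if_true]
    have harg : ∀ i ∈ Finset.range p, ((lpr (Q*p) (((t₀ + i*Q : ℕ):ℤ) - s') : ℤ):ℚ)
        = ((lpr (Q*p) (((t₀:ℤ) - s') + (i:ℤ)*(Q:ℤ)) : ℤ):ℚ) := by
      intro i _
      congr 2
      push_cast
      ring
    rw [Finset.sum_congr rfl harg, lpr_sum_q hQ hp1]
  · simp [gcd_add_mul, h]

theorem innerT_dvd (hQ : 1 ≤ Q) (hp1 : 1 ≤ p) (hpQ : Nat.Coprime p Q) (s' : ℤ) :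
    ∑ t ∈ Finset.Icc 1 (Q*p), (if Nat.gcd t Q = 1 ∧ p ∣ t then ((lpr (Q*p) ((t:ℤ) - s') : ℤ):ℚ) else 0)
    = ∑ t' ∈ Finset.Icc 1 Q, (if Nat.gcd t' Q = 1 then
        ((lpr (Q*p) ((p:ℤ)*(t':ℤ) - s') : ℤ):ℚ) else 0) := by
  have e1 : ∀ t : ℕ, (if Nat.gcd t Q = 1 ∧ p ∣ t then ((lpr (Q*p) ((t:ℤ) - s') : ℤ):ℚ) else 0)
      = (if p ∣ t then (if Nat.gcd t Q = 1 then ((lpr (Q*p) ((t:ℤ) - s') : ℤ):ℚ) else 0) else 0) := by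
    intro t
    by_cases h1 : p ∣ t <;> by_cases h2 : Nat.gcd t Q = 1 <;> simp [h1, h2]
  rw [Finset.sum_congr rfl (fun t _ => e1 t), ← Finset.sum_filter,
    sum_Icc_dvd Q p hp1 (fun t => if Nat.gcd t Q = 1 then ((lpr (Q*p) ((t:ℤ) - s') : ℤ):ℚ) else 0)]
  refine Finset.sum_congr rfl (fun t' _ => ?_)
  rw [if_congr (gcd_p_mul hpQ t') rfl rfl]
  by_cases h : Nat.gcd t' Q = 1
  · simp only [h, if_true]
    norm_cast
  · simp [h]

theorem outerS (hQ : 1 ≤ Q) (hp1 : 1 ≤ p) (hdQ : d ∣ Q) (F : ℕ → ℚ)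
    (hF : ∀ x y : ℕ, x % Q = y % Q → F x = F y) :
    ∑ s ∈ Finset.Icc 1 (Q*p), (if Nat.gcd s Q = 1 ∧ (s:ℤ) ≡ a [ZMOD d] then F s else 0)
    = p * ∑ s₀ ∈ Finset.Icc 1 Q, (if Nat.gcd s₀ Q = 1 ∧ (s₀:ℤ) ≡ a [ZMOD d] then F s₀ else 0) := by
  rw [sum_Icc_mul Q p (fun s => if Nat.gcd s Q = 1 ∧ (s:ℤ) ≡ a [ZMOD d] then F s else 0)]
  have e : ∀ i ∈ Finset.range p, ∀ s₀ ∈ Finset.Icc 1 Q,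
      (if Nat.gcd (s₀ + i*Q) Q = 1 ∧ ((s₀ + i*Q : ℕ):ℤ) ≡ a [ZMOD d] then F (s₀ + i*Q) else 0)
      = (if Nat.gcd s₀ Q = 1 ∧ (s₀:ℤ) ≡ a [ZMOD d] then F s₀ else 0) := by
    intro i _ s₀ _
    have hmod : (s₀ + i*Q) % Q = s₀ % Q := Nat.add_mul_mod_self_right s₀ i Q
    rw [if_congr (and_congr (by rw [gcd_mod_inv hmod]) (zmod_mod_inv hdQ hmod)) (hF _ _ hmod) rfl]
  calc ∑ i ∈ Finset.range p, ∑ s₀ ∈ Finset.Icc 1 Q,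
        (if Nat.gcd (s₀ + i*Q) Q = 1 ∧ ((s₀ + i*Q : ℕ):ℤ) ≡ a [ZMOD d] then F (s₀ + i*Q) else 0)
      = ∑ i ∈ Finset.range p, ∑ s₀ ∈ Finset.Icc 1 Q,
        (if Nat.gcd s₀ Q = 1 ∧ (s₀:ℤ) ≡ a [ZMOD d] then F s₀ else 0) :=
        Finset.sum_congr rfl (fun i hi => Finset.sum_congr rfl (fun s₀ hs₀ => e i hi s₀ hs₀))
    _ = p * ∑ s₀ ∈ Finset.Icc 1 Q, (if Nat.gcd s₀ Q = 1 ∧ (s₀:ℤ) ≡ a [ZMOD d] then F s₀ else 0) := by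
        rw [Finset.sum_const, nsmul_eq_mul, Finset.card_range]

theorem outerS_dvd (hQ : 1 ≤ Q) (hp1 : 1 ≤ p) (F : ℕ → ℚ) (P₀ : ℕ → Prop) [DecidablePred P₀] :
    ∑ s ∈ Finset.Icc 1 (Q*p), (if P₀ s ∧ p ∣ s then F s else 0)
    = ∑ s' ∈ Finset.Icc 1 Q, (if P₀ (p*s') then F (p*s') else 0) := by
  have e1 : ∀ s : ℕ, (if P₀ s ∧ p ∣ s then F s else 0)
      = (if p ∣ s then (if P₀ s then F s else 0) else 0) := by
    intro s
    by_cases h1 : p ∣ s <;> by_cases h2 : P₀ s <;> simp [h1, h2]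
  rw [Finset.sum_congr rfl (fun s _ => e1 s), ← Finset.sum_filter,
    sum_Icc_dvd Q p hp1 (fun s => if P₀ s then F s else 0)]

theorem outerS_lpr (hQ : 1 ≤ Q) (hp1 : 1 ≤ p) (hdQ : d ∣ Q) (c : ℤ) :
    ∑ s ∈ Finset.Icc 1 (Q*p), (if Nat.gcd s Q = 1 ∧ (s:ℤ) ≡ a [ZMOD d]
        then ((lpr (Q*p) (c - (s:ℤ)) : ℤ):ℚ) else 0)
    = ∑ s₀ ∈ Finset.Icc 1 Q, (if Nat.gcd s₀ Q = 1 ∧ (s₀:ℤ) ≡ a [ZMOD d] then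
        ((p:ℚ) * ((lpr Q (c - (s₀:ℤ)) : ℤ):ℚ) + (Q:ℚ)*((p:ℚ)*((p:ℚ)-1)/2)) else 0) := by
  rw [sum_Icc_mul Q p (fun s => if Nat.gcd s Q = 1 ∧ (s:ℤ) ≡ a [ZMOD d]
        then ((lpr (Q*p) (c - (s:ℤ)) : ℤ):ℚ) else 0)]
  rw [Finset.sum_comm]
  refine Finset.sum_congr rfl (fun s₀ _ => ?_)
  have hmod : ∀ i : ℕ, (s₀ + i*Q) % Q = s₀ % Q := fun i => Nat.add_mul_mod_self_right s₀ i Q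
  have econd : ∀ i : ℕ, (Nat.gcd (s₀ + i*Q) Q = 1 ∧ ((s₀ + i*Q : ℕ):ℤ) ≡ a [ZMOD d])
      ↔ (Nat.gcd s₀ Q = 1 ∧ (s₀:ℤ) ≡ a [ZMOD d]) := by
    intro i
    exact and_congr (by rw [gcd_mod_inv (hmod i)]) (zmod_mod_inv hdQ (hmod i))
  by_cases h : Nat.gcd s₀ Q = 1 ∧ (s₀:ℤ) ≡ a [ZMOD d]
  · have e2 : ∀ i ∈ Finset.range p,
        (if Nat.gcd (s₀ + i*Q) Q = 1 ∧ ((s₀ + i*Q : ℕ):ℤ) ≡ a [ZMOD d]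
          then ((lpr (Q*p) (c - ((s₀ + i*Q : ℕ):ℤ)) : ℤ):ℚ) else 0)
        = ((lpr (Q*p) ((c - (s₀:ℤ)) - (i:ℤ)*(Q:ℤ)) : ℤ):ℚ) := by
      intro i _
      rw [if_pos ((econd i).mpr h)]
      congr 2
      push_cast
      ring
    rw [Finset.sum_congr rfl e2, lpr_sum_q_neg hQ hp1, if_pos h]
  · have e2 : ∀ i ∈ Finset.range p,
        (if Nat.gcd (s₀ + i*Q) Q = 1 ∧ ((s₀ + i*Q : ℕ):ℤ) ≡ a [ZMOD d]
          then ((lpr (Q*p) (c - ((s₀ + i*Q : ℕ):ℤ)) : ℤ):ℚ) else 0) = 0 := by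
      intro i _
      rw [if_neg (fun hh => h ((econd i).mp hh))]
    rw [Finset.sum_congr rfl e2, if_neg h]
    simp

end reductions

section evals
variable {Q d p : ℕ} {a : ℤ}

theorem card_cond (hQ : 1 ≤ Q) (c : ℚ) :
    ∑ s₀ ∈ Finset.Icc 1 Q, (if Nat.gcd s₀ Q = 1 ∧ (s₀:ℤ) ≡ a [ZMOD d] then c else 0)
    = (Ncnt Q d a : ℚ) * c := by
  rw [← Finset.sum_filter, Finset.sum_const, nsmul_eq_mul, Ncnt]

theorem card_gcd (hQ : 1 ≤ Q) (c : ℚ) :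
    ∑ t₀ ∈ Finset.Icc 1 Q, (if Nat.gcd t₀ Q = 1 then c else 0)
    = (Q.totient : ℚ) * c := by
  rw [← Finset.sum_filter, Finset.sum_const, nsmul_eq_mul, card_Icc_coprime Q hQ]

theorem eval_split (hQ : 1 ≤ Q) (c : ℚ) (g : ℕ → ℕ → ℚ) :
    ∑ s₀ ∈ Finset.Icc 1 Q, (if Nat.gcd s₀ Q = 1 ∧ (s₀:ℤ) ≡ a [ZMOD d] then
      (∑ t₀ ∈ Finset.Icc 1 Q, if Nat.gcd t₀ Q = 1 then ((p:ℚ) * g s₀ t₀ + c) else 0) else 0)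
    = (p:ℚ) * (∑ s₀ ∈ Finset.Icc 1 Q, (if Nat.gcd s₀ Q = 1 ∧ (s₀:ℤ) ≡ a [ZMOD d] then
        (∑ t₀ ∈ Finset.Icc 1 Q, if Nat.gcd t₀ Q = 1 then g s₀ t₀ else 0) else 0))
      + (Ncnt Q d a : ℚ) * (Q.totient : ℚ) * c := by
  have e1 : ∀ s₀, (∑ t₀ ∈ Finset.Icc 1 Q, if Nat.gcd t₀ Q = 1 then ((p:ℚ) * g s₀ t₀ + c) else 0)
      = (p:ℚ) * (∑ t₀ ∈ Finset.Icc 1 Q, if Nat.gcd t₀ Q = 1 then g s₀ t₀ else 0)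
        + (Q.totient : ℚ) * c := by
    intro s₀
    rw [← card_gcd hQ c, Finset.mul_sum, ← Finset.sum_add_distrib]
    refine Finset.sum_congr rfl (fun t₀ _ => ?_)
    by_cases h : Nat.gcd t₀ Q = 1 <;> simp [h]
  have e2 : ∀ s₀ : ℕ, (if Nat.gcd s₀ Q = 1 ∧ (s₀:ℤ) ≡ a [ZMOD d] then
      (∑ t₀ ∈ Finset.Icc 1 Q, if Nat.gcd t₀ Q = 1 then ((p:ℚ) * g s₀ t₀ + c) else 0) else 0)
      = (p:ℚ) * (if Nat.gcd s₀ Q = 1 ∧ (s₀:ℤ) ≡ a [ZMOD d] then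
          (∑ t₀ ∈ Finset.Icc 1 Q, if Nat.gcd t₀ Q = 1 then g s₀ t₀ else 0) else 0)
        + (if Nat.gcd s₀ Q = 1 ∧ (s₀:ℤ) ≡ a [ZMOD d] then (Q.totient : ℚ) * c else 0) := by
    intro s₀
    by_cases h : Nat.gcd s₀ Q = 1 ∧ (s₀:ℤ) ≡ a [ZMOD d]
    · rw [if_pos h, if_pos h, if_pos h, e1 s₀]
    · simp [h]
  rw [Finset.sum_congr rfl (fun s₀ _ => e2 s₀), Finset.sum_add_distrib, ← Finset.mul_sum,
    card_cond hQ]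
  ring

theorem coreA :
    ∑ s₀ ∈ Finset.Icc 1 Q, (if Nat.gcd s₀ Q = 1 ∧ (s₀:ℤ) ≡ a [ZMOD d] then
      (∑ t₀ ∈ Finset.Icc 1 Q, if Nat.gcd t₀ Q = 1 then ((lpr Q ((t₀:ℤ) - (s₀:ℤ)) : ℤ):ℚ) else 0) else 0)
    = Ssum Q d a := by
  rw [Ssum]
  refine Finset.sum_congr rfl (fun s₀ _ => ?_)
  by_cases h : Nat.gcd s₀ Q = 1 ∧ (s₀:ℤ) ≡ a [ZMOD d]
  · rw [if_pos h]
    refine Finset.sum_congr rfl (fun t₀ _ => ?_)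
    by_cases h2 : Nat.gcd t₀ Q = 1 <;> simp [h, h2]
  · rw [if_neg h]
    symm
    refine Finset.sum_eq_zero (fun t₀ _ => ?_)
    rw [if_neg (fun hh => h hh.1)]

theorem lprQ_mod_inv (hQ : 1 ≤ Q) {x y : ℕ} (h : x % Q = y % Q) (c : ℤ) :
    lpr Q (c - (x:ℤ)) = lpr Q (c - (y:ℤ)) := by
  apply lpr_congr
  have hxy : (x:ℤ) % Q = (y:ℤ) % Q := by
    have := congrArg (Nat.cast : ℕ → ℤ) h
    push_cast at this
    exact this
  exact Int.ModEq.sub_left c (hxy : Int.ModEq Q x y)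

theorem lprQ_mod_inv' (hQ : 1 ≤ Q) {x y : ℕ} (h : x % Q = y % Q) (c : ℤ) :
    lpr Q ((x:ℤ) - c) = lpr Q ((y:ℤ) - c) := by
  apply lpr_congr
  have hxy : (x:ℤ) % Q = (y:ℤ) % Q := by
    have := congrArg (Nat.cast : ℕ → ℤ) h
    push_cast at this
    exact this
  exact Int.ModEq.sub_right c (hxy : Int.ModEq Q x y)

theorem coreB (hQ : 1 ≤ Q) (hp1 : 1 ≤ p) (hpQ : Nat.Coprime p Q) :
    ∑ s₀ ∈ Finset.Icc 1 Q, (if Nat.gcd s₀ Q = 1 ∧ (s₀:ℤ) ≡ a [ZMOD d] then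
      (∑ t₀ ∈ Finset.Icc 1 Q, if Nat.gcd t₀ Q = 1 then
        ((lpr Q ((p:ℤ)*(t₀:ℤ) - (s₀:ℤ)) : ℤ):ℚ) else 0) else 0)
    = Ssum Q d a := by
  rw [← coreA]
  refine Finset.sum_congr rfl (fun s₀ _ => ?_)
  by_cases h : Nat.gcd s₀ Q = 1 ∧ (s₀:ℤ) ≡ a [ZMOD d]
  · rw [if_pos h, if_pos h, ← Finset.sum_filter, ← Finset.sum_filter]
    have hre := sum_mul_reindex hQ hp1 hpQ (fun t => Nat.gcd t Q = 1)
      (fun x y hxy => by show Nat.gcd x Q = 1 ↔ Nat.gcd y Q = 1; rw [gcd_mod_inv hxy])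
      (fun x => gcd_p_mul hpQ x)
      (fun x => ((lpr Q ((x:ℤ) - (s₀:ℤ)) : ℤ):ℚ))
      (fun x y hxy => by
        show ((lpr Q ((x:ℤ) - (s₀:ℤ)) : ℤ):ℚ) = ((lpr Q ((y:ℤ) - (s₀:ℤ)) : ℤ):ℚ)
        rw [lprQ_mod_inv' hQ hxy])
    rw [← hre]
    refine Finset.sum_congr rfl (fun t _ => ?_)
    norm_cast
  · rw [if_neg h, if_neg h]

theorem coreC (hQ : 1 ≤ Q) (hp1 : 1 ≤ p) (hpQ : Nat.Coprime p Q) (hd2 : 2 ≤ d)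
    (hdQ : d ∣ Q) (hpd : p % d = 1) :
    ∑ s₀ ∈ Finset.Icc 1 Q, (if Nat.gcd s₀ Q = 1 ∧ (s₀:ℤ) ≡ a [ZMOD d] then
      (∑ t₀ ∈ Finset.Icc 1 Q, if Nat.gcd t₀ Q = 1 then
        ((lpr Q ((t₀:ℤ) - (p:ℤ)*(s₀:ℤ)) : ℤ):ℚ) else 0) else 0)
    = Ssum Q d a := by
  rw [← coreA, ← Finset.sum_filter, ← Finset.sum_filter]
  have hre := sum_mul_reindex hQ hp1 hpQ
    (fun s => Nat.gcd s Q = 1 ∧ (s:ℤ) ≡ a [ZMOD d])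
    (fun x y hxy => by
      show Nat.gcd x Q = 1 ∧ (x:ℤ) ≡ a [ZMOD d] ↔ Nat.gcd y Q = 1 ∧ (y:ℤ) ≡ a [ZMOD d]
      exact and_congr (by rw [gcd_mod_inv hxy]) (zmod_mod_inv hdQ hxy))
    (fun x => and_congr (gcd_p_mul hpQ x) (cond_p_mul hd2 hpd x))
    (fun x => ∑ t₀ ∈ Finset.Icc 1 Q, if Nat.gcd t₀ Q = 1 then
        ((lpr Q ((t₀:ℤ) - (x:ℤ)) : ℤ):ℚ) else 0)
    (fun x y hxy => Finset.sum_congr rfl (fun t₀ _ => by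
      by_cases h2 : Nat.gcd t₀ Q = 1
      · rw [if_pos h2, if_pos h2, lprQ_mod_inv hQ hxy]
      · rw [if_neg h2, if_neg h2]))
  rw [← hre]
  refine Finset.sum_congr rfl (fun s _ => Finset.sum_congr rfl (fun t₀ _ => ?_))
  by_cases h2 : Nat.gcd t₀ Q = 1
  · rw [if_pos h2, if_pos h2]
    norm_cast
  · rw [if_neg h2, if_neg h2]

end evals

section abcd
variable {Q d p : ℕ} {a : ℤ}

theorem ite_sum_push {P : Prop} [Decidable P] {s : Finset ℕ} (f : ℕ → ℚ) :
    (if P then (∑ x ∈ s, f x) else 0) = ∑ x ∈ s, (if P then f x else 0) := by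
  by_cases h : P <;> simp [h]

theorem ite_nest {P R : Prop} [Decidable P] [Decidable R] (x : ℚ) :
    (if P then (if R then x else 0) else 0) = if P ∧ R then x else 0 := by
  by_cases hP : P <;> by_cases hR : R <;> simp [hP, hR]

theorem ite_swap {P R : Prop} [Decidable P] [Decidable R] (x : ℚ) :
    (if P then (if R then x else 0) else 0) = (if R then (if P then x else 0) else 0) := by
  by_cases hP : P <;> by_cases hR : R <;> simp [hP, hR]

theorem sumA (hQ : 1 ≤ Q) (hp1 : 1 ≤ p) (hdQ : d ∣ Q) :
    ∑ s ∈ Finset.Icc 1 (Q*p), ∑ t ∈ Finset.Icc 1 (Q*p),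
      (if (Nat.gcd s Q = 1 ∧ (s:ℤ) ≡ a [ZMOD d]) ∧ Nat.gcd t Q = 1
        then ((lpr (Q*p) ((t:ℤ)-(s:ℤ)) : ℤ):ℚ) else 0)
    = (p:ℚ) * ((p:ℚ) * Ssum Q d a
        + (Ncnt Q d a : ℚ) * (Q.totient : ℚ) * ((Q:ℚ)*((p:ℚ)*((p:ℚ)-1)/2))) := by
  have e1 : ∀ s : ℕ, ∑ t ∈ Finset.Icc 1 (Q*p),
      (if (Nat.gcd s Q = 1 ∧ (s:ℤ) ≡ a [ZMOD d]) ∧ Nat.gcd t Q = 1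
        then ((lpr (Q*p) ((t:ℤ)-(s:ℤ)) : ℤ):ℚ) else 0)
      = (if Nat.gcd s Q = 1 ∧ (s:ℤ) ≡ a [ZMOD d] then
          ∑ t₀ ∈ Finset.Icc 1 Q, (if Nat.gcd t₀ Q = 1 then
            ((p:ℚ) * ((lpr Q ((t₀:ℤ) - (s:ℤ)) : ℤ):ℚ) + (Q:ℚ)*((p:ℚ)*((p:ℚ)-1)/2)) else 0)
          else 0) := by
    intro s
    rw [← innerT hQ hp1 (s:ℤ), ite_sum_push]
    exact Finset.sum_congr rfl (fun t _ => (ite_nest _).symm)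
  rw [Finset.sum_congr rfl (fun s _ => e1 s),
    outerS hQ hp1 hdQ _ (fun x y hxy => Finset.sum_congr rfl (fun t₀ _ => by
      by_cases h2 : Nat.gcd t₀ Q = 1
      · rw [if_pos h2, if_pos h2, lprQ_mod_inv hQ hxy]
      · rw [if_neg h2, if_neg h2])),
    eval_split hQ _ _, coreA]

theorem sumB (hQ : 1 ≤ Q) (hp1 : 1 ≤ p) (hdQ : d ∣ Q) (hpQ : Nat.Coprime p Q) :
    ∑ s ∈ Finset.Icc 1 (Q*p), ∑ t ∈ Finset.Icc 1 (Q*p),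
      (if (Nat.gcd s Q = 1 ∧ (s:ℤ) ≡ a [ZMOD d]) ∧ (Nat.gcd t Q = 1 ∧ p ∣ t)
        then ((lpr (Q*p) ((t:ℤ)-(s:ℤ)) : ℤ):ℚ) else 0)
    = (p:ℚ) * Ssum Q d a
        + (Ncnt Q d a : ℚ) * (Q.totient : ℚ) * ((Q:ℚ)*((p:ℚ)*((p:ℚ)-1)/2)) := by
  have e1 : ∀ s : ℕ, ∑ t ∈ Finset.Icc 1 (Q*p),
      (if (Nat.gcd s Q = 1 ∧ (s:ℤ) ≡ a [ZMOD d]) ∧ (Nat.gcd t Q = 1 ∧ p ∣ t)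
        then ((lpr (Q*p) ((t:ℤ)-(s:ℤ)) : ℤ):ℚ) else 0)
      = ∑ t' ∈ Finset.Icc 1 Q, (if Nat.gcd t' Q = 1 then
          (if Nat.gcd s Q = 1 ∧ (s:ℤ) ≡ a [ZMOD d] then
            ((lpr (Q*p) ((p:ℤ)*(t':ℤ) - (s:ℤ)) : ℤ):ℚ) else 0) else 0) := by
    intro s
    rw [show (∑ t ∈ Finset.Icc 1 (Q*p),
      (if (Nat.gcd s Q = 1 ∧ (s:ℤ) ≡ a [ZMOD d]) ∧ (Nat.gcd t Q = 1 ∧ p ∣ t)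
        then ((lpr (Q*p) ((t:ℤ)-(s:ℤ)) : ℤ):ℚ) else 0))
      = (if Nat.gcd s Q = 1 ∧ (s:ℤ) ≡ a [ZMOD d] then
          ∑ t ∈ Finset.Icc 1 (Q*p), (if Nat.gcd t Q = 1 ∧ p ∣ t
            then ((lpr (Q*p) ((t:ℤ)-(s:ℤ)) : ℤ):ℚ) else 0) else 0) from by
      rw [ite_sum_push]
      exact Finset.sum_congr rfl (fun t _ => (ite_nest _).symm)]
    rw [innerT_dvd hQ hp1 hpQ (s:ℤ), ite_sum_push]
    exact Finset.sum_congr rfl (fun t' _ => by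
      by_cases h1 : Nat.gcd s Q = 1 ∧ (s:ℤ) ≡ a [ZMOD d] <;>
        by_cases h2 : Nat.gcd t' Q = 1 <;> simp [h1, h2])
  rw [Finset.sum_congr rfl (fun s _ => e1 s), Finset.sum_comm]
  have e2 : ∀ t' ∈ Finset.Icc 1 Q, ∑ s ∈ Finset.Icc 1 (Q*p),
      (if Nat.gcd t' Q = 1 then
        (if Nat.gcd s Q = 1 ∧ (s:ℤ) ≡ a [ZMOD d] then
          ((lpr (Q*p) ((p:ℤ)*(t':ℤ) - (s:ℤ)) : ℤ):ℚ) else 0) else 0)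
      = (if Nat.gcd t' Q = 1 then
          ∑ s₀ ∈ Finset.Icc 1 Q, (if Nat.gcd s₀ Q = 1 ∧ (s₀:ℤ) ≡ a [ZMOD d] then
            ((p:ℚ) * ((lpr Q ((p:ℤ)*(t':ℤ) - (s₀:ℤ)) : ℤ):ℚ)
              + (Q:ℚ)*((p:ℚ)*((p:ℚ)-1)/2)) else 0) else 0) := by
    intro t' _
    by_cases h : Nat.gcd t' Q = 1
    · simp only [h, if_true]
      exact outerS_lpr hQ hp1 hdQ ((p:ℤ)*(t':ℤ))
    · simp [h]
  rw [Finset.sum_congr rfl e2,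
    Finset.sum_congr rfl (fun t' _ => ite_sum_push _), Finset.sum_comm,
    Finset.sum_congr rfl (fun s₀ _ => Finset.sum_congr rfl (fun t' _ => ite_swap _)),
    Finset.sum_congr rfl (fun s₀ _ => (ite_sum_push _).symm),
    eval_split hQ _ _, coreB hQ hp1 hpQ]

theorem sumC (hQ : 1 ≤ Q) (hp1 : 1 ≤ p) (hdQ : d ∣ Q) (hpQ : Nat.Coprime p Q)
    (hd2 : 2 ≤ d) (hpd : p % d = 1) :
    ∑ s ∈ Finset.Icc 1 (Q*p), ∑ t ∈ Finset.Icc 1 (Q*p),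
      (if ((Nat.gcd s Q = 1 ∧ (s:ℤ) ≡ a [ZMOD d]) ∧ p ∣ s) ∧ Nat.gcd t Q = 1
        then ((lpr (Q*p) ((t:ℤ)-(s:ℤ)) : ℤ):ℚ) else 0)
    = (p:ℚ) * Ssum Q d a
        + (Ncnt Q d a : ℚ) * (Q.totient : ℚ) * ((Q:ℚ)*((p:ℚ)*((p:ℚ)-1)/2)) := by
  have e1 : ∀ s : ℕ, ∑ t ∈ Finset.Icc 1 (Q*p),
      (if ((Nat.gcd s Q = 1 ∧ (s:ℤ) ≡ a [ZMOD d]) ∧ p ∣ s) ∧ Nat.gcd t Q = 1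
        then ((lpr (Q*p) ((t:ℤ)-(s:ℤ)) : ℤ):ℚ) else 0)
      = (if (Nat.gcd s Q = 1 ∧ (s:ℤ) ≡ a [ZMOD d]) ∧ p ∣ s then
          ∑ t₀ ∈ Finset.Icc 1 Q, (if Nat.gcd t₀ Q = 1 then
            ((p:ℚ) * ((lpr Q ((t₀:ℤ) - (s:ℤ)) : ℤ):ℚ) + (Q:ℚ)*((p:ℚ)*((p:ℚ)-1)/2)) else 0)
          else 0) := by
    intro s
    rw [← innerT hQ hp1 (s:ℤ), ite_sum_push]
    exact Finset.sum_congr rfl (fun t _ => (ite_nest _).symm)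
  rw [Finset.sum_congr rfl (fun s _ => e1 s), outerS_dvd hQ hp1]
  have e2 : ∀ s' ∈ Finset.Icc 1 Q,
      (if Nat.gcd (p*s') Q = 1 ∧ ((p*s' : ℕ):ℤ) ≡ a [ZMOD d] then
        ∑ t₀ ∈ Finset.Icc 1 Q, (if Nat.gcd t₀ Q = 1 then
          ((p:ℚ) * ((lpr Q ((t₀:ℤ) - ((p*s' : ℕ):ℤ)) : ℤ):ℚ) + (Q:ℚ)*((p:ℚ)*((p:ℚ)-1)/2))
          else 0) else 0)
      = (if Nat.gcd s' Q = 1 ∧ (s':ℤ) ≡ a [ZMOD d] then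
          ∑ t₀ ∈ Finset.Icc 1 Q, (if Nat.gcd t₀ Q = 1 then
            ((p:ℚ) * ((lpr Q ((t₀:ℤ) - (p:ℤ)*(s':ℤ)) : ℤ):ℚ) + (Q:ℚ)*((p:ℚ)*((p:ℚ)-1)/2))
            else 0) else 0) := by
    intro s' _
    refine if_congr (and_congr (gcd_p_mul hpQ s') (cond_p_mul hd2 hpd s'))
      (Finset.sum_congr rfl (fun t₀ _ => ?_)) rfl
    refine if_congr Iff.rfl ?_ rfl
    have : ((p*s' : ℕ):ℤ) = (p:ℤ)*(s':ℤ) := by push_cast; ring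
    rw [this]
  rw [Finset.sum_congr rfl e2, eval_split hQ _ _, coreC hQ hp1 hpQ hd2 hdQ hpd]

theorem sumD (hQ : 1 ≤ Q) (hp1 : 1 ≤ p) (hdQ : d ∣ Q) (hpQ : Nat.Coprime p Q)
    (hd2 : 2 ≤ d) (hpd : p % d = 1) :
    ∑ s ∈ Finset.Icc 1 (Q*p), ∑ t ∈ Finset.Icc 1 (Q*p),
      (if ((Nat.gcd s Q = 1 ∧ (s:ℤ) ≡ a [ZMOD d]) ∧ p ∣ s) ∧ (Nat.gcd t Q = 1 ∧ p ∣ t)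
        then ((lpr (Q*p) ((t:ℤ)-(s:ℤ)) : ℤ):ℚ) else 0)
    = (p:ℚ) * Ssum Q d a := by
  have e1 : ∀ s : ℕ, ∑ t ∈ Finset.Icc 1 (Q*p),
      (if ((Nat.gcd s Q = 1 ∧ (s:ℤ) ≡ a [ZMOD d]) ∧ p ∣ s) ∧ (Nat.gcd t Q = 1 ∧ p ∣ t)
        then ((lpr (Q*p) ((t:ℤ)-(s:ℤ)) : ℤ):ℚ) else 0)
      = (if (Nat.gcd s Q = 1 ∧ (s:ℤ) ≡ a [ZMOD d]) ∧ p ∣ s then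
          ∑ t' ∈ Finset.Icc 1 Q, (if Nat.gcd t' Q = 1 then
            ((lpr (Q*p) ((p:ℤ)*(t':ℤ) - (s:ℤ)) : ℤ):ℚ) else 0) else 0) := by
    intro s
    rw [← innerT_dvd hQ hp1 hpQ (s:ℤ), ite_sum_push]
    exact Finset.sum_congr rfl (fun t _ => (ite_nest _).symm)
  rw [Finset.sum_congr rfl (fun s _ => e1 s), outerS_dvd hQ hp1]
  have e2 : ∀ s' ∈ Finset.Icc 1 Q,
      (if Nat.gcd (p*s') Q = 1 ∧ ((p*s' : ℕ):ℤ) ≡ a [ZMOD d] then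
        ∑ t' ∈ Finset.Icc 1 Q, (if Nat.gcd t' Q = 1 then
          ((lpr (Q*p) ((p:ℤ)*(t':ℤ) - ((p*s' : ℕ):ℤ)) : ℤ):ℚ) else 0) else 0)
      = (p:ℚ) * (if Nat.gcd s' Q = 1 ∧ (s':ℤ) ≡ a [ZMOD d] then
          ∑ t' ∈ Finset.Icc 1 Q, (if Nat.gcd t' Q = 1 then
            ((lpr Q ((t':ℤ) - (s':ℤ)) : ℤ):ℚ) else 0) else 0) := by
    intro s' _
    rw [if_congr (and_congr (gcd_p_mul hpQ s') (cond_p_mul hd2 hpd s')) rfl rfl]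
    by_cases h : Nat.gcd s' Q = 1 ∧ (s':ℤ) ≡ a [ZMOD d]
    · rw [if_pos h, if_pos h, Finset.mul_sum]
      refine Finset.sum_congr rfl (fun t' _ => ?_)
      by_cases h2 : Nat.gcd t' Q = 1
      · rw [if_pos h2, mul_ite, mul_zero, if_pos h2]
        have harg : (p:ℤ)*(t':ℤ) - ((p*s' : ℕ):ℤ) = (p:ℤ) * ((t':ℤ) - (s':ℤ)) := by
          push_cast; ring
        rw [harg, lpr_mul_left hQ hp1]
        push_cast
        ring
      · simp [h2]
    · simp [h]
  rw [Finset.sum_congr rfl e2, ← Finset.mul_sum, coreA]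

end abcd

section step
variable {Q d p : ℕ} {a : ℤ}

theorem gcd_mul_split (hp : p.Prime) (z : ℕ) :
    Nat.gcd z (Q*p) = 1 ↔ (Nat.gcd z Q = 1 ∧ ¬ p ∣ z) := by
  have h1 : Nat.Coprime z (Q*p) ↔ Nat.Coprime z Q ∧ Nat.Coprime z p :=
    Nat.coprime_mul_iff_right
  have h2 : Nat.Coprime z p ↔ ¬ p ∣ z := by
    rw [Nat.coprime_comm]
    exact hp.coprime_iff_not_dvd
  exact h1.trans (and_congr Iff.rfl h2)

theorem stepS (hQ : 1 ≤ Q) (hd2 : 2 ≤ d) (hdQ : d ∣ Q) (hp : p.Prime)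
    (hpQ : Nat.Coprime p Q) (hpd : p % d = 1) :
    Ssum (Q*p) d a = (p:ℚ)*((p:ℚ)-1) * Ssum Q d a
      + (Ncnt Q d a : ℚ) * (Q.totient : ℚ) * ((Q:ℚ)*((p:ℚ)*((p:ℚ)-1)/2)) * ((p:ℚ)-2) := by
  have hp1 : 1 ≤ p := hp.pos
  have hsplit : ∀ s t : ℕ,
      (if (Nat.gcd s (Q*p) = 1 ∧ (s:ℤ) ≡ a [ZMOD d]) ∧ Nat.gcd t (Q*p) = 1
        then ((lpr (Q*p) ((t:ℤ)-(s:ℤ)) : ℤ):ℚ) else 0)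
      = (if (Nat.gcd s Q = 1 ∧ (s:ℤ) ≡ a [ZMOD d]) ∧ Nat.gcd t Q = 1
          then ((lpr (Q*p) ((t:ℤ)-(s:ℤ)) : ℤ):ℚ) else 0)
        - (if (Nat.gcd s Q = 1 ∧ (s:ℤ) ≡ a [ZMOD d]) ∧ (Nat.gcd t Q = 1 ∧ p ∣ t)
          then ((lpr (Q*p) ((t:ℤ)-(s:ℤ)) : ℤ):ℚ) else 0)
        - (if ((Nat.gcd s Q = 1 ∧ (s:ℤ) ≡ a [ZMOD d]) ∧ p ∣ s) ∧ Nat.gcd t Q = 1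
          then ((lpr (Q*p) ((t:ℤ)-(s:ℤ)) : ℤ):ℚ) else 0)
        + (if ((Nat.gcd s Q = 1 ∧ (s:ℤ) ≡ a [ZMOD d]) ∧ p ∣ s) ∧ (Nat.gcd t Q = 1 ∧ p ∣ t)
          then ((lpr (Q*p) ((t:ℤ)-(s:ℤ)) : ℤ):ℚ) else 0) := by
    intro s t
    rw [if_congr (and_congr (and_congr (gcd_mul_split hp s) Iff.rfl) (gcd_mul_split hp t))
      rfl rfl]
    by_cases h1 : Nat.gcd s Q = 1 <;> by_cases h2 : (s:ℤ) ≡ a [ZMOD d] <;>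
      by_cases h3 : p ∣ s <;> by_cases h4 : Nat.gcd t Q = 1 <;> by_cases h5 : p ∣ t <;>
      simp [h1, h2, h3, h4, h5]
  rw [Ssum, Finset.sum_congr rfl (fun s _ => Finset.sum_congr rfl (fun t _ => hsplit s t))]
  simp only [Finset.sum_add_distrib, Finset.sum_sub_distrib]
  rw [sumA hQ hp1 hdQ, sumB hQ hp1 hdQ hpQ, sumC hQ hp1 hdQ hpQ hd2 hpd,
    sumD hQ hp1 hdQ hpQ hd2 hpd]
  ring

theorem stepN (hQ : 1 ≤ Q) (hd2 : 2 ≤ d) (hdQ : d ∣ Q) (hp : p.Prime)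
    (hpQ : Nat.Coprime p Q) (hpd : p % d = 1) :
    (Ncnt (Q*p) d a : ℚ) = ((p:ℚ)-1) * (Ncnt Q d a : ℚ) := by
  have hp1 : 1 ≤ p := hp.pos
  have hQp : 1 ≤ Q*p := Nat.one_le_iff_ne_zero.mpr (by positivity)
  have base : ∀ (X : ℕ), 1 ≤ X → (Ncnt X d a : ℚ)
      = ∑ s ∈ Finset.Icc 1 X, (if Nat.gcd s X = 1 ∧ (s:ℤ) ≡ a [ZMOD d] then (1:ℚ) else 0) := by
    intro X hX
    rw [card_cond hX 1, mul_one]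
  rw [base (Q*p) hQp]
  have hsplit : ∀ s : ℕ,
      (if Nat.gcd s (Q*p) = 1 ∧ (s:ℤ) ≡ a [ZMOD d] then (1:ℚ) else 0)
      = (if Nat.gcd s Q = 1 ∧ (s:ℤ) ≡ a [ZMOD d] then (1:ℚ) else 0)
        - (if (Nat.gcd s Q = 1 ∧ (s:ℤ) ≡ a [ZMOD d]) ∧ p ∣ s then (1:ℚ) else 0) := by
    intro s
    rw [if_congr (and_congr (gcd_mul_split hp s) Iff.rfl) rfl rfl]
    by_cases h1 : Nat.gcd s Q = 1 <;> by_cases h2 : (s:ℤ) ≡ a [ZMOD d] <;>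
      by_cases h3 : p ∣ s <;> simp [h1, h2, h3]
  rw [Finset.sum_congr rfl (fun s _ => hsplit s), Finset.sum_sub_distrib,
    outerS hQ hp1 hdQ (fun _ => (1:ℚ)) (fun _ _ _ => rfl),
    outerS_dvd hQ hp1 (fun _ => (1:ℚ))]
  have e2 : ∀ s' ∈ Finset.Icc 1 Q,
      (if Nat.gcd (p*s') Q = 1 ∧ ((p*s' : ℕ):ℤ) ≡ a [ZMOD d] then (1:ℚ) else 0)
      = (if Nat.gcd s' Q = 1 ∧ (s':ℤ) ≡ a [ZMOD d] then (1:ℚ) else 0) := by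
    intro s' _
    exact if_congr (and_congr (gcd_p_mul hpQ s') (cond_p_mul hd2 hpd s')) rfl rfl
  rw [Finset.sum_congr rfl e2, ← base Q hQ]
  ring

end step

section final
variable {Q d p : ℕ} {a : ℤ}

theorem Rstar_eq (Q d : ℕ) (a : ℤ) :
    Rstar Q d a = (1 / (Nat.totient Q : ℚ) ^ 2) * Ssum Q d a := by
  rw [Rstar, Ssum]
  congr 1
  refine Finset.sum_congr rfl (fun s _ => Finset.sum_congr rfl (fun t _ => ?_))
  refine if_congr ?_ rfl rfl
  constructor
  · rintro ⟨hg, hm⟩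
    have := Nat.coprime_mul_iff_left.mp hg
    exact ⟨⟨this.1, hm⟩, this.2⟩
  · rintro ⟨⟨h1, hm⟩, h2⟩
    exact ⟨Nat.coprime_mul_iff_left.mpr ⟨h1, h2⟩, hm⟩

theorem step_bias (hQ : 1 ≤ Q) (hd2 : 2 ≤ d) (hdQ : d ∣ Q) (hp : p.Prime)
    (hpQ : Nat.Coprime p Q) (hpd : p % d = 1)
    (hNφ : (Ncnt Q d a : ℚ) * (d.totient : ℚ) = (Q.totient : ℚ)) :
    Rbias (Q*p) d a = ((p:ℚ)/((p:ℚ)-1)) * Rbias Q d a := by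
  have hp2 : 2 ≤ p := hp.two_le
  have hφQ : (Q.totient : ℚ) ≠ 0 := by
    have := Nat.totient_pos.mpr (show 0 < Q by omega)
    positivity
  have hφd : (d.totient : ℚ) ≠ 0 := by
    have := Nat.totient_pos.mpr (show 0 < d by omega)
    positivity
  have hpne : ((p:ℚ)-1) ≠ 0 := by
    have : (2:ℚ) ≤ (p:ℚ) := by exact_mod_cast hp2
    linarith
  have hφmul : ((Q*p).totient : ℚ) = (Q.totient : ℚ) * ((p:ℚ)-1) := by
    rw [Nat.totient_mul (Nat.coprime_comm.mp hpQ), Nat.totient_prime hp]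
    push_cast [Nat.cast_sub hp.pos]
    ring
  have hN : (Ncnt Q d a : ℚ) = (Q.totient : ℚ) / (d.totient : ℚ) := by
    field_simp
    linarith [hNφ]
  rw [Rbias, Rbias, Rstar_eq, Rstar_eq, stepS hQ hd2 hdQ hp hpQ hpd, Rbar, Rbar, hN, hφmul]
  have hQp : ((Q*p : ℕ) : ℚ) = (Q:ℚ)*(p:ℚ) := by push_cast; ring
  rw [hQp]
  field_simp
  ring

theorem int_gcd_modeq {n : ℕ} {x y : ℤ} (h : x ≡ y [ZMOD (n:ℕ)]) :
    Int.gcd x n = Int.gcd y n := by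
  obtain ⟨k, hk⟩ := h.dvd
  have hy : y = x + (n:ℤ)*k := by linarith
  have d1 : (↑(Int.gcd x n) : ℤ) ∣ y := by
    rw [hy]
    exact dvd_add (Int.gcd_dvd_left _ _) (Dvd.dvd.mul_right (Int.gcd_dvd_right _ _) k)
  have d2 : (↑(Int.gcd x n) : ℤ) ∣ ↑(Int.gcd y n) := Int.dvd_coe_gcd d1 (Int.gcd_dvd_right _ _)
  have e1 : (↑(Int.gcd y n) : ℤ) ∣ x := by
    have : x = y - (n:ℤ)*k := by linarith
    rw [this]
    exact dvd_sub (Int.gcd_dvd_left _ _) (Dvd.dvd.mul_right (Int.gcd_dvd_right _ _) k)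
  have e2 : (↑(Int.gcd y n) : ℤ) ∣ ↑(Int.gcd x n) := Int.dvd_coe_gcd e1 (Int.gcd_dvd_right _ _)
  exact Nat.dvd_antisymm (Int.natCast_dvd_natCast.mp d2) (Int.natCast_dvd_natCast.mp e2)

theorem Ncnt_base (hd2 : 2 ≤ d) (ha : Int.gcd a d = 1) : Ncnt d d a = 1 := by
  have hd1 : 1 ≤ d := by omega
  set x₀ : ℕ := (lpr d a).toNat with hx₀
  have hb1 := lpr_pos hd1 a
  have hb2 := lpr_le hd1 a
  have hcast : (x₀ : ℤ) = lpr d a := Int.toNat_of_nonneg (by omega)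
  have hmem : x₀ ∈ (Finset.Icc 1 d).filter
      (fun s => Nat.gcd s d = 1 ∧ (s:ℤ) ≡ a [ZMOD d]) := by
    simp only [Finset.mem_filter, Finset.mem_Icc]
    refine ⟨⟨by omega, by omega⟩, ?_, ?_⟩
    · have hg : Int.gcd (x₀ : ℤ) d = Int.gcd a d := by
        rw [hcast]
        exact int_gcd_modeq (lpr_emod a)
      rw [Int.gcd_natCast_natCast] at hg
      rw [hg, ha]
    · rw [hcast]
      exact lpr_emod a
  have huniq : ∀ y ∈ (Finset.Icc 1 d).filter
      (fun s => Nat.gcd s d = 1 ∧ (s:ℤ) ≡ a [ZMOD d]), y = x₀ := by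
    intro y hy
    simp only [Finset.mem_filter, Finset.mem_Icc] at hy
    have : lpr d a = (y:ℤ) := lpr_eq_of hd1 (by exact_mod_cast hy.1.1) (by exact_mod_cast hy.1.2) hy.2.2
    omega
  rw [Ncnt, Finset.eq_singleton_iff_unique_mem.mpr ⟨hmem, huniq⟩, Finset.card_singleton]

end final

theorem main_ind (d : ℕ) (hd : d.Prime) (a : ℤ) (ha : Int.gcd a d = 1) (F : Finset ℕ)
    (hF : ∀ q ∈ F, q.Prime ∧ q % d = 1) :
    (Ncnt (d * ∏ q ∈ F, q) d a : ℚ) * (d.totient : ℚ) = ((d * ∏ q ∈ F, q).totient : ℚ) ∧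
    Rbias (d * ∏ q ∈ F, q) d a = (∏ q ∈ F, ((q:ℚ)/((q:ℚ)-1))) * Rbias d d a := by
  classical
  induction F using Finset.induction_on with
  | empty =>
    simp only [Finset.prod_empty, mul_one]
    constructor
    · rw [Ncnt_base hd.two_le ha]
      simp
    · rw [one_mul]
  | @insert p F hpF ih =>
    have hF' : ∀ q ∈ F, q.Prime ∧ q % d = 1 := fun q hq => hF q (Finset.mem_insert_of_mem hq)
    obtain ⟨hp, hpd⟩ := hF p (Finset.mem_insert_self p F)
    obtain ⟨ihN, ihR⟩ := ih hF'
    set Q := d * ∏ q ∈ F, q with hQdef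
    have hprodpos : 0 < ∏ q ∈ F, q := Finset.prod_pos (fun q hq => (hF' q hq).1.pos)
    have hQpos : 1 ≤ Q := by
      have := hd.pos
      rw [hQdef]
      exact Nat.one_le_iff_ne_zero.mpr (by positivity)
    have hdQ : d ∣ Q := dvd_mul_right d _
    have hpne : p ≠ d := by
      intro h
      rw [h, Nat.mod_self] at hpd
      exact absurd hpd (by omega)
    have hpdco : Nat.Coprime p d := (Nat.coprime_primes hp hd).mpr hpne
    have hpco : Nat.Coprime p (∏ q ∈ F, q) :=
      Nat.Coprime.prod_right (fun q hq => (Nat.coprime_primes hp (hF' q hq).1).mpr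
        (fun he => hpF (he ▸ hq)))
    have hpQ : Nat.Coprime p Q := Nat.Coprime.mul_right hpdco hpco
    have hprod : d * ∏ q ∈ insert p F, q = Q * p := by
      rw [Finset.prod_insert hpF, hQdef]
      ring
    have hφmul : ((Q*p).totient : ℚ) = (Q.totient : ℚ) * ((p:ℚ)-1) := by
      rw [Nat.totient_mul (Nat.coprime_comm.mp hpQ), Nat.totient_prime hp]
      push_cast [Nat.cast_sub hp.pos]
      ring
    constructor
    · rw [hprod, stepN hQpos hd.two_le hdQ hp hpQ hpd, hφmul]
      linear_combination ((p:ℚ)-1) * ihN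
    · rw [hprod, step_bias hQpos hd.two_le hdQ hp hpQ hpd ihN, ihR, Finset.prod_insert hpF]
      ring


/-- For prime `d` and `Q_T = d · ∏_{p ≤ T, p prime, p ≡ 1 (mod d)} p`, one has
`R_{Q_T}(d;a) = (∏_{p ≤ T, p prime, p ≡ 1 (mod d)} p/(p-1)) · R_d(d;a)`. -/
theorem bias_primorial_sieve (d : ℕ) (hd : d.Prime) (a : ℤ) (ha : Int.gcd a d = 1)
    (T : ℝ) (hT : 1 ≤ T) :
    Rbias (d * ∏ p ∈ (Finset.range (⌊T⌋₊ + 1)).filter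
        (fun (p : ℕ) => p.Prime ∧ (p : ℝ) ≤ T ∧ p % d = 1), p) d a =
      (∏ p ∈ (Finset.range (⌊T⌋₊ + 1)).filter
        (fun (p : ℕ) => p.Prime ∧ (p : ℝ) ≤ T ∧ p % d = 1), ((p : ℚ) / ((p : ℚ) - 1))) *
      Rbias d d a := by
  exact (main_ind d hd a ha _ (fun q hq => by
    have := Finset.mem_filter.mp hq
    exact ⟨this.2.1, this.2.2.2⟩)).2
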